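/- If a normal modal logic L is sound and complete with respect to a class of completely additive modal algebras (𝒱-BAOs) and contains the van Benthem axiom □◇⊤ → □(□(□p → p) → p), then L contains □◇⊤ → □⊥. Consequently, any normal modal logic containing the van Benthem axiom but not containing □◇⊤ → □⊥ is 𝒱-incomplete. -/
import Mathlib


/-- Modal formulas. -/
inductive MF : Type
  | var : ℕ → MF
  | bot : MF
  | imp : MF → MF → MF
  | box : MF → MF

/-- A (bundled) modal algebra: a Boolean algebra with an operator. -/
structure MA where
  carrier : Type
  [ba : BooleanAlgebra carrier]
  dia : carrier → carrier
  dia_join : ∀ x y : carrier, dia (x ⊔ y) = dia x ⊔ dia y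
  dia_bot : dia ⊥ = ⊥

attribute [instance] MA.ba

/-- Evaluation of a modal formula in a modal algebra under a valuation. -/
def MA.eval (A : MA) (θ : ℕ → A.carrier) : MF → A.carrier
  | MF.var n => θ n
  | MF.bot => ⊥
  | MF.imp φ ψ => (A.eval θ φ)ᶜ ⊔ A.eval θ ψ
  | MF.box φ => (A.dia ((A.eval θ φ)ᶜ))ᶜ

/-- Validity of a formula over a modal algebra. -/
def MA.valid (A : MA) (φ : MF) : Prop := ∀ θ : ℕ → A.carrier, A.eval θ φ = ⊤

/-- Complete additivity of the operator of a modal algebra. -/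
def MA.CompletelyAdditive (A : MA) : Prop :=
  ∀ (X : Set A.carrier) (s : A.carrier), IsLUB X s → IsLUB (A.dia '' X) (A.dia s)

def MF.neg (φ : MF) : MF := MF.imp φ MF.bot
def MF.top : MF := MF.neg MF.bot
def MF.dia (φ : MF) : MF := MF.neg (MF.box (MF.neg φ))

/-- The van Benthem axiom `□◇⊤ → □(□(□p → p) → p)`. -/
def vBAxiom : MF :=
  MF.imp (MF.box (MF.dia MF.top))
    (MF.box (MF.imp (MF.box (MF.imp (MF.box (MF.var 0)) (MF.var 0))) (MF.var 0)))

/-- The formula `□◇⊤ → □⊥`. -/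
def vBConseq : MF := MF.imp (MF.box (MF.dia MF.top)) (MF.box MF.bot)


private lemma le_of_sup_compl' {α : Type} [BooleanAlgebra α] {a b : α}
    (h : b ⊔ aᶜ = ⊤) : a ≤ b := by
  calc a = a ⊓ (b ⊔ aᶜ) := by rw [h, inf_top_eq]
    _ = a ⊓ b := by rw [inf_sup_left, inf_compl_eq_bot, sup_bot_eq]
    _ ≤ b := inf_le_right

private lemma le_of_inf_compl_le {α : Type} [BooleanAlgebra α] {a y : α}
    (h : a ⊓ yᶜ ≤ y) : a ≤ y := by
  have hb : a ⊓ yᶜ = ⊥ := le_bot_iff.mp ((le_inf h inf_le_right).trans_eq inf_compl_eq_bot)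
  calc a = a ⊓ (y ⊔ yᶜ) := by rw [sup_compl_eq_top, inf_top_eq]
    _ = a ⊓ y ⊔ a ⊓ yᶜ := inf_sup_left a y yᶜ
    _ = a ⊓ y := by rw [hb, sup_bot_eq]
    _ ≤ y := inf_le_right

/-- Every completely additive modal algebra validating the van Benthem axiom
validates `□◇⊤ → □⊥`. -/
lemma MA.key (A : MA) (hCA : A.CompletelyAdditive) (hax : A.valid vBAxiom) :
    A.valid vBConseq := by
  classical
  set c : A.carrier := A.dia (A.dia ⊤)ᶜ with hc
  -- the axiom instances: for every p, ◇(□(□p → p) ∧ ¬p) ≤ ◇¬◇⊤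
  have hW : ∀ p : A.carrier,
      A.dia ((A.dia ((A.dia pᶜ)ᶜ ⊓ pᶜ))ᶜ ⊓ pᶜ) ≤ c := by
    intro p
    have h := hax (fun _ => p)
    simp only [vBAxiom, MF.dia, MF.neg, MF.top, MA.eval, compl_bot, sup_bot_eq,
      compl_compl, compl_sup, compl_top, inf_top_eq] at h
    exact le_of_sup_compl' h
  set W : Set A.carrier := {x | A.dia x ≤ c} with hWdef
  -- ⊤ is the least upper bound of W
  have hlub : IsLUB W ⊤ := by
    constructor
    · intro x _; exact le_top
    · intro y hy
      -- Step 1 : □(□y → y) ≤ y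
      have h1 : (A.dia ((A.dia yᶜ)ᶜ ⊓ yᶜ))ᶜ ≤ y :=
        le_of_inf_compl_le (hy (hW y))
      -- Step 2 : with u := ◇¬y ⊔ y we have □u ≤ u
      set u : A.carrier := A.dia yᶜ ⊔ y with hu
      have hucompl : uᶜ = (A.dia yᶜ)ᶜ ⊓ yᶜ := by rw [hu, compl_sup]
      have hbu : (A.dia uᶜ)ᶜ ≤ u := by
        rw [hucompl]; exact h1.trans le_sup_right
      have hzero : (A.dia uᶜ)ᶜ ⊓ uᶜ = ⊥ :=
        le_bot_iff.mp ((inf_le_inf_right uᶜ hbu).trans_eq inf_compl_eq_bot)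
      -- Step 3 : ¬u ∈ W, hence □y ≤ y
      have h3 : A.dia uᶜ ≤ c := by
        have := hW u
        rwa [hzero, A.dia_bot, compl_bot, top_inf_eq] at this
      have huley : uᶜ ≤ y := hy h3
      have hboxy : (A.dia yᶜ)ᶜ ≤ y := by
        apply le_of_inf_compl_le
        rw [← hucompl]; exact huley
      -- Step 4 : □y = y = ⊤
      have hzero2 : (A.dia yᶜ)ᶜ ⊓ yᶜ = ⊥ := by
        have h4 : yᶜ ≤ A.dia yᶜ := compl_le_iff_compl_le.mp hboxy
        exact le_bot_iff.mp ((inf_le_inf_left _ h4).trans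
          (by rw [inf_comm]; exact inf_compl_eq_bot.le))
      have : (A.dia ((A.dia yᶜ)ᶜ ⊓ yᶜ))ᶜ = ⊤ := by
        rw [hzero2, A.dia_bot, compl_bot]
      exact this ▸ h1
  -- complete additivity : ◇⊤ ≤ ◇¬◇⊤
  have hmain : A.dia ⊤ ≤ c := by
    have h5 := hCA W ⊤ hlub
    refine h5.2 ?_
    rintro z ⟨x, hx, rfl⟩
    exact hx
  intro θ
  simp only [vBConseq, MF.dia, MF.neg, MF.top, MA.eval, compl_bot, sup_bot_eq,
    compl_compl, compl_sup, compl_top, inf_top_eq]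
  calc A.dia (A.dia ⊤)ᶜ ⊔ (A.dia ⊤)ᶜ = c ⊔ (A.dia ⊤)ᶜ := rfl
    _ = ⊤ := eq_top_iff.mpr ((sup_compl_eq_top (x := A.dia ⊤)).symm.le.trans
        (sup_le_sup_right hmain _))

/-- If a logic `L` is sound and complete with respect to a class `K` of
completely additive modal algebras and contains the van Benthem axiom,
then it contains `□◇⊤ → □⊥`. -/
theorem stmt_19 (L : Set MF) (K : Set MA)
    (hCA : ∀ A ∈ K, A.CompletelyAdditive)
    (hSC : ∀ φ : MF, φ ∈ L ↔ ∀ A ∈ K, A.valid φ)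
    (hvB : vBAxiom ∈ L) :
    vBConseq ∈ L := by
  rw [hSC]
  intro A hA
  exact A.key (hCA A hA) (((hSC vBAxiom).mp hvB) A hA)
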